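/- Let μ = ⊗_{k=1}^∞ μ_k be the infinite product measure on Ω = ∏_k Ω_k with Ω_k finite and μ_k(i) = p_{ik}. If ∏_{k=1}^∞ max_i p_{ik} > 0, then μ is purely atomic: the set A_+ = {ω : μ({ω}) > 0} is countable and μ(A_+) = 1. -/

import Mathlib

open MeasureTheory Filter Finset Topology

/-- If `∏_{k=1}^∞ max_i p_{ik} > 0` (i.e. the nonincreasing partial products of the
column maxima are bounded below by a positive constant), then the infinite product
measure `μ` is purely atomic: the set `A₊ = {ω : μ{ω} > 0}` is countable and
`μ(A₊) = 1`. -/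
theorem product_measure_purely_atomic (N : ℕ → ℕ) (p : (k : ℕ) → Fin (N k + 1) → ℝ)
    (μ : Measure ((k : ℕ) → Fin (N k + 1))) [IsProbabilityMeasure μ]
    (hp : ∀ k i, 0 ≤ p k i) (hps : ∀ k, ∑ i, p k i = 1)
    (hμ : ∀ (n : ℕ) (ω : (k : ℕ) → Fin (N k + 1)),
      μ {x | ∀ k < n, x k = ω k} = ENNReal.ofReal (∏ k ∈ Finset.range n, p k (ω k)))
    (hmax : ∃ c > 0, ∀ n, c ≤ ∏ k ∈ Finset.range n, ⨆ i, p k i) :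
    Set.Countable {ω : (k : ℕ) → Fin (N k + 1) | μ {ω} ≠ 0} ∧
    μ {ω : (k : ℕ) → Fin (N k + 1) | μ {ω} ≠ 0} = 1 := by
  classical
  set Ω := (k : ℕ) → Fin (N k + 1) with hΩ
  obtain ⟨c, hc, hcle⟩ := hmax
  -- basic bounds on p
  have hple : ∀ k i, p k i ≤ 1 := fun k i => by
    calc p k i ≤ ∑ j, p k j := Finset.single_le_sum (fun j _ => hp k j) (Finset.mem_univ i)
    _ = 1 := hps k
  -- the column maxima
  set q : ℕ → ℝ := fun k => ⨆ i, p k i with hq_def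
  have hpq : ∀ k i, p k i ≤ q k := fun k i =>
    le_ciSup (Set.Finite.bddAbove (Set.finite_range _)) i
  have hq_ex : ∀ k, ∃ i, p k i = q k := by
    intro k
    obtain ⟨i, hi⟩ := Finite.exists_max (p k)
    exact ⟨i, le_antisymm (hpq k i) (ciSup_le hi)⟩
  have hq0 : ∀ k, 0 ≤ q k := fun k => (hp k 0).trans (hpq k 0)
  have hq1 : ∀ k, q k ≤ 1 := fun k => ciSup_le fun i => hple k i
  set Q : ℕ → ℝ := fun n => ∏ k ∈ Finset.range n, q k with hQ_def
  have hQpos : ∀ n, 0 < Q n := fun n => lt_of_lt_of_le hc (hcle n)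
  have hQanti : Antitone Q := antitone_nat_of_succ_le fun n => by
    have h1 : Q (n + 1) = Q n * q n := Finset.prod_range_succ _ _
    nlinarith [hq1 n, hQpos n, hq0 n]
  set c' : ℝ := ⨅ n, Q n with hc'_def
  have hQbdd : BddBelow (Set.range Q) := ⟨c, by rintro x ⟨n, rfl⟩; exact hcle n⟩
  have hc' : c ≤ c' := le_ciInf hcle
  have hc'le : ∀ n, c' ≤ Q n := fun n => ciInf_le hQbdd n
  have hQtend : Tendsto Q atTop (𝓝 c') := tendsto_atTop_ciInf hQanti hQbdd
  -- measurability of "box" sets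
  have hmeas : ∀ (n : ℕ) (P : ∀ k, Set (Fin (N k + 1))),
      MeasurableSet {x : Ω | ∀ k < n, x k ∈ P k} := by
    intro n P
    have h1 : {x : Ω | ∀ k < n, x k ∈ P k}
        = ⋂ k ∈ Finset.range n, (fun x : Ω => x k) ⁻¹' (P k) := by
      ext x; simp [Finset.mem_range]
    rw [h1]
    exact MeasurableSet.biInter (Finset.range n).countable_toSet
      fun k _ => (measurable_pi_apply k) ((Set.toFinite (P k)).measurableSet)
  have hcylmeas : ∀ (n : ℕ) (ω : Ω), MeasurableSet {x : Ω | ∀ k < n, x k = ω k} := by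
    intro n ω
    have h1 : {x : Ω | ∀ k < n, x k = ω k}
        = {x : Ω | ∀ k < n, x k ∈ ({ω k} : Set (Fin (N k + 1)))} := by
      ext x; simp
    rw [h1]; exact hmeas n _
  -- the measure of a box set
  have hbox : ∀ (n : ℕ) (S : ∀ k, Finset (Fin (N k + 1))),
      μ {x : Ω | ∀ k < n, x k ∈ S k}
        = ENNReal.ofReal (∏ k ∈ Finset.range n, ∑ i ∈ S k, p k i) := by
    intro n S
    set G := (Finset.range n).pi S with hG
    set e : (∀ k ∈ Finset.range n, Fin (N k + 1)) → Ω := fun g k =>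
      if h : k < n then g k (Finset.mem_range.mpr h) else 0 with he_def
    have he : ∀ g k (h : k < n), e g k = g k (Finset.mem_range.mpr h) := by
      intro g k h; simp only [he_def, dif_pos h]
    have hset : {x : Ω | ∀ k < n, x k ∈ S k} = ⋃ g ∈ G, {x : Ω | ∀ k < n, x k = e g k} := by
      ext x
      simp only [Set.mem_setOf_eq, Set.mem_iUnion]
      constructor
      · intro hx
        refine ⟨fun k _ => x k, ?_, fun k hk => ?_⟩
        · rw [hG, Finset.mem_pi]; intro k hk; exact hx k (Finset.mem_range.mp hk)
        · exact ((he (fun k _ => x k) k hk).symm : x k = _)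
      · rintro ⟨g, hg, hxg⟩ k hk
        rw [hxg k hk, he _ k hk]
        exact Finset.mem_pi.mp hg k _
    have hdisj : Set.PairwiseDisjoint (↑G) (fun g => {x : Ω | ∀ k < n, x k = e g k}) := by
      intro g₁ h₁ g₂ h₂ hne
      refine Set.disjoint_left.mpr fun x hx₁ hx₂ => hne ?_
      funext k hk
      have hkn : k < n := Finset.mem_range.mp hk
      have e1 : g₁ k hk = x k := by rw [hx₁ k hkn]; exact (he g₁ k hkn).symm
      have e2 : g₂ k hk = x k := by rw [hx₂ k hkn]; exact (he g₂ k hkn).symm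
      rw [e1, e2]
    rw [hset, measure_biUnion_finset hdisj (fun g _ => hcylmeas n (e g))]
    have hsum : ∀ g ∈ G, μ {x : Ω | ∀ k < n, x k = e g k}
        = ENNReal.ofReal (∏ k ∈ Finset.range n, p k (e g k)) := fun g _ => hμ n (e g)
    rw [Finset.sum_congr rfl hsum, ← ENNReal.ofReal_sum_of_nonneg
      (fun g _ => Finset.prod_nonneg fun k _ => hp k _)]
    congr 1
    rw [Finset.prod_sum]
    refine Finset.sum_congr rfl fun g hg => ?_
    rw [← Finset.prod_attach (Finset.range n) (fun k => p k (e g k))]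
    refine Finset.prod_congr rfl fun x _ => ?_
    rw [he g x.1 (Finset.mem_range.mp x.2)]
  -- the partial products along ω and their limit
  set f : ℕ → Ω → ℝ := fun n ω => ∏ k ∈ Finset.range n, p k (ω k) with hf_def
  have hf0 : ∀ n ω, 0 ≤ f n ω := fun n ω => Finset.prod_nonneg fun k _ => hp k _
  have hfanti : ∀ ω, Antitone fun n => f n ω := fun ω => antitone_nat_of_succ_le fun n => by
    have h1 : f (n + 1) ω = f n ω * p n (ω n) := Finset.prod_range_succ _ _
    nlinarith [hple n (ω n), hf0 n ω, hp n (ω n)]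
  set L : Ω → ℝ := fun ω => ⨅ n, f n ω with hL_def
  have hLbdd : ∀ ω, BddBelow (Set.range fun n => f n ω) :=
    fun ω => ⟨0, by rintro x ⟨n, rfl⟩; exact hf0 n ω⟩
  have hLle : ∀ ω n, L ω ≤ f n ω := fun ω n => ciInf_le (hLbdd ω) n
  have hLtend : ∀ ω, Tendsto (fun n => f n ω) atTop (𝓝 (L ω)) :=
    fun ω => tendsto_atTop_ciInf (hfanti ω) (hLbdd ω)
  -- singletons
  have hsingmeas : ∀ ω : Ω, MeasurableSet ({ω} : Set Ω) := by
    intro ω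
    have hseteq : ({ω} : Set Ω) = ⋂ n, {x : Ω | ∀ k < n, x k = ω k} := by
      ext x
      simp only [Set.mem_singleton_iff, Set.mem_iInter, Set.mem_setOf_eq]
      constructor
      · rintro rfl; exact fun n k _ => rfl
      · intro h; funext k; exact h (k + 1) k (Nat.lt_succ_self k)
    rw [hseteq]
    exact MeasurableSet.iInter fun n => hcylmeas n ω
  have hsing : ∀ ω : Ω, μ {ω} = ENNReal.ofReal (L ω) := by
    intro ω
    have hseteq : ({ω} : Set Ω) = ⋂ n, {x : Ω | ∀ k < n, x k = ω k} := by
      ext x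
      simp only [Set.mem_singleton_iff, Set.mem_iInter, Set.mem_setOf_eq]
      constructor
      · rintro rfl; exact fun n k _ => rfl
      · intro h; funext k; exact h (k + 1) k (Nat.lt_succ_self k)
    have hanti : Antitone fun n => {x : Ω | ∀ k < n, x k = ω k} :=
      fun a b hab x hx k hk => hx k (hk.trans_le hab)
    have h1 : Tendsto (fun n => μ {x : Ω | ∀ k < n, x k = ω k}) atTop (𝓝 (μ {ω})) := by
      rw [hseteq]
      exact tendsto_measure_iInter_atTop (fun n => (hcylmeas n ω).nullMeasurableSet) hanti
        ⟨0, measure_ne_top μ _⟩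
    have h2 : Tendsto (fun n => μ {x : Ω | ∀ k < n, x k = ω k}) atTop
        (𝓝 (ENNReal.ofReal (L ω))) := by
      rw [show (fun n => μ {x : Ω | ∀ k < n, x k = ω k}) = fun n => ENNReal.ofReal (f n ω) from
        funext fun n => hμ n ω]
      exact (ENNReal.continuous_ofReal.tendsto _).comp (hLtend ω)
    exact tendsto_nhds_unique h1 h2
  -- countability of the atom set
  have hA_count : Set.Countable {ω : Ω | μ {ω} ≠ 0} := by
    have h1 := MeasureTheory.Measure.countable_meas_pos_of_disjoint_iUnion (μ := μ)
      (As := fun ω : Ω => ({ω} : Set Ω)) (fun ω => hsingmeas ω)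
      (fun a b hab => Set.disjoint_singleton.mpr hab)
    have h2 : {ω : Ω | μ {ω} ≠ 0} = {ω : Ω | 0 < μ ({ω} : Set Ω)} := by
      ext ω; simp only [Set.mem_setOf_eq]; exact pos_iff_ne_zero.symm
    rw [h2]; exact h1
  -- coordinate sets with zero probability are null
  have hnullcoord : ∀ (k : ℕ) (i : Fin (N k + 1)), p k i = 0 → μ {x : Ω | x k = i} = 0 := by
    intro k i hpi
    set S : ∀ j, Finset (Fin (N j + 1)) :=
      fun j => Finset.univ.filter (fun x => j = k → (x : ℕ) = (i : ℕ)) with hS_def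
    have hset : {x : Ω | x k = i} = {x : Ω | ∀ j < k + 1, x j ∈ S j} := by
      ext x
      simp only [Set.mem_setOf_eq, hS_def, Finset.mem_filter, Finset.mem_univ, true_and]
      constructor
      · intro h j _ hjk; subst hjk; rw [h]
      · intro h; exact Fin.val_injective (h k (Nat.lt_succ_self k) rfl)
    have hSk : S k = {i} := by
      ext x
      simp only [hS_def, Finset.mem_filter, Finset.mem_univ, true_and, Finset.mem_singleton]
      constructor
      · intro h
        exact Fin.val_injective (by simpa using h)
      · intro h
        subst h
        simp
    rw [hset, hbox]
    rw [Finset.prod_eq_zero (Finset.self_mem_range_succ k)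
      (by rw [hSk, Finset.sum_singleton, hpi]), ENNReal.ofReal_zero]
  have hZnull : ∀ k, μ {x : Ω | p k (x k) = 0} = 0 := by
    intro k
    have h1 : {x : Ω | p k (x k) = 0}
        = ⋃ i ∈ Finset.univ.filter (fun i => p k i = 0), {x : Ω | x k = i} := by
      ext x
      simp only [Set.mem_setOf_eq, Set.mem_iUnion, Finset.mem_filter, Finset.mem_univ, true_and]
      exact ⟨fun h => ⟨x k, h, rfl⟩, by rintro ⟨j, hj, rfl⟩; exact hj⟩
    rw [h1]
    refine le_antisymm ((measure_biUnion_finset_le _ _).trans ?_) (zero_le)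
    rw [Finset.sum_congr rfl (fun i hi => hnullcoord k i (Finset.mem_filter.mp hi).2)]
    simp
  -- the tail sets T m
  set SE : ℕ → ∀ j, Finset (Fin (N j + 1)) :=
    fun m j => Finset.univ.filter (fun x => m ≤ j → p j x = q j) with hSE_def
  set T : ℕ → Set Ω := fun m => {x | ∀ k, m ≤ k → p k (x k) = q k} with hT_def
  have hT_eq : ∀ m, T m = ⋂ n, {x : Ω | ∀ k < n, x k ∈ SE m k} := by
    intro m
    ext x
    simp only [hT_def, hSE_def, Set.mem_setOf_eq, Set.mem_iInter, Finset.mem_filter,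
      Finset.mem_univ, true_and]
    constructor
    · intro h n k _ hk; exact h k hk
    · intro h k hk; exact h (k + 1) k (Nat.lt_succ_self k) hk
  have hTmeas : ∀ m, MeasurableSet (T m) := by
    intro m
    rw [hT_eq m]
    exact MeasurableSet.iInter fun n => hmeas n _
  -- key sum bounds for SE
  have hSE_lt : ∀ m k, k < m → ∑ i ∈ SE m k, p k i = 1 := by
    intro m k hk
    have h1 : SE m k = Finset.univ := by
      ext x
      simp only [hSE_def, Finset.mem_filter, Finset.mem_univ, true_and, iff_true]
      intro h; omega
    rw [h1]; exact hps k
  have hSE_ge : ∀ m k, q k ≤ ∑ i ∈ SE m k, p k i := by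
    intro m k
    obtain ⟨i, hi⟩ := hq_ex k
    calc q k = p k i := hi.symm
    _ ≤ ∑ j ∈ SE m k, p k j := Finset.single_le_sum (fun j _ => hp k j)
        (by simp only [hSE_def, Finset.mem_filter, Finset.mem_univ, true_and]; exact fun _ => hi)
  have hSE_le1 : ∀ m k, ∑ i ∈ SE m k, p k i ≤ 1 := by
    intro m k
    calc ∑ i ∈ SE m k, p k i ≤ ∑ i, p k i :=
      Finset.sum_le_sum_of_subset_of_nonneg (Finset.subset_univ _) (fun i _ _ => hp k i)
    _ = 1 := hps k
  -- lower bound on μ (T m)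
  have hTlb : ∀ m, ENNReal.ofReal (c' / Q m) ≤ μ (T m) := by
    intro m
    have hanti : Antitone fun n => {x : Ω | ∀ k < n, x k ∈ SE m k} :=
      fun a b hab x hx k hk => hx k (hk.trans_le hab)
    have htend : Tendsto (fun n => μ {x : Ω | ∀ k < n, x k ∈ SE m k}) atTop (𝓝 (μ (T m))) := by
      rw [hT_eq m]
      exact tendsto_measure_iInter_atTop (fun n => (hmeas n _).nullMeasurableSet) hanti
        ⟨0, measure_ne_top μ _⟩
    refine ge_of_tendsto htend (Eventually.of_forall fun n => ?_)
    rw [hbox]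
    apply ENNReal.ofReal_le_ofReal
    rw [div_le_iff₀ (hQpos m)]
    rcases le_or_gt n m with hnm | hmn
    · have h1 : ∏ k ∈ Finset.range n, ∑ i ∈ SE m k, p k i = 1 :=
        Finset.prod_eq_one fun k hk => hSE_lt m k ((Finset.mem_range.mp hk).trans_le hnm)
      rw [h1, one_mul]; exact hc'le m
    · have hmn' : m ≤ n := hmn.le
      have h1 : ∏ k ∈ Finset.range n, ∑ i ∈ SE m k, p k i
          = (∏ k ∈ Finset.range m, ∑ i ∈ SE m k, p k i) * ∏ k ∈ Finset.Ico m n, ∑ i ∈ SE m k, p k i :=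
        (Finset.prod_range_mul_prod_Ico _ hmn').symm
      have h2 : ∏ k ∈ Finset.range m, ∑ i ∈ SE m k, p k i = 1 :=
        Finset.prod_eq_one fun k hk => hSE_lt m k (Finset.mem_range.mp hk)
      have h3 : ∏ k ∈ Finset.Ico m n, q k ≤ ∏ k ∈ Finset.Ico m n, ∑ i ∈ SE m k, p k i :=
        Finset.prod_le_prod (fun k _ => hq0 k) (fun k _ => hSE_ge m k)
      have h4 : Q m * ∏ k ∈ Finset.Ico m n, q k = Q n := Finset.prod_range_mul_prod_Ico _ hmn'
      calc c' ≤ Q n := hc'le n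
      _ = Q m * ∏ k ∈ Finset.Ico m n, q k := h4.symm
      _ ≤ Q m * ∏ k ∈ Finset.Ico m n, ∑ i ∈ SE m k, p k i :=
        mul_le_mul_of_nonneg_left h3 (hQpos m).le
      _ = (∏ k ∈ Finset.range n, ∑ i ∈ SE m k, p k i) * Q m := by rw [h1, h2, one_mul, mul_comm]
  -- the complement of the atom set is small
  have hAc_sub : ∀ m, {ω : Ω | μ {ω} ≠ 0}ᶜ
      ⊆ (⋃ k ∈ Finset.range m, {x : Ω | p k (x k) = 0}) ∪ (T m)ᶜ := by
    intro m ω hω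
    by_cases hT : ω ∈ T m
    · left
      simp only [Set.mem_iUnion, Set.mem_setOf_eq]
      by_contra hno
      push_neg at hno
      have hω0 : μ ({ω} : Set Ω) = 0 := by
        simpa only [Set.mem_compl_iff, Set.mem_setOf_eq, not_not] using hω
      have hfm : 0 < f m ω := Finset.prod_pos fun k hk =>
        lt_of_le_of_ne (hp k (ω k)) (Ne.symm (hno k hk))
      have hLpos : 0 < L ω := by
        have hbound : ∀ n, f m ω * (c / Q m) ≤ f n ω := by
          intro n
          rcases le_or_gt n m with hnm | hmn
          · have h1 : f m ω ≤ f n ω := hfanti ω hnm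
            have h2 : c / Q m ≤ 1 := by
              rw [div_le_one (hQpos m)]; exact hcle m
            nlinarith
          · have hmn' : m ≤ n := hmn.le
            have h1 : f n ω = f m ω * ∏ k ∈ Finset.Ico m n, p k (ω k) :=
              (Finset.prod_range_mul_prod_Ico _ hmn').symm
            have h2 : ∏ k ∈ Finset.Ico m n, p k (ω k) = ∏ k ∈ Finset.Ico m n, q k :=
              Finset.prod_congr rfl fun k hk => hT k (Finset.mem_Ico.mp hk).1
            have h3 : Q m * ∏ k ∈ Finset.Ico m n, q k = Q n := Finset.prod_range_mul_prod_Ico _ hmn'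
            have h4 : c / Q m ≤ ∏ k ∈ Finset.Ico m n, q k := by
              rw [div_le_iff₀ (hQpos m)]
              calc c ≤ Q n := hcle n
              _ = (∏ k ∈ Finset.Ico m n, q k) * Q m := by rw [← h3, mul_comm]
            rw [h1, h2]
            exact mul_le_mul_of_nonneg_left h4 (hf0 m ω)
        have hεpos : 0 < f m ω * (c / Q m) :=
          mul_pos hfm (div_pos hc (hQpos m))
        exact lt_of_lt_of_le hεpos (le_ciInf hbound)
      rw [hsing ω] at hω0
      exact absurd hω0 (by positivity)
    · right; exact hT
  have hAcnull : μ ({ω : Ω | μ {ω} ≠ 0}ᶜ) = 0 := by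
    have hub : ∀ m, μ ({ω : Ω | μ {ω} ≠ 0}ᶜ) ≤ 1 - ENNReal.ofReal (c' / Q m) := by
      intro m
      have hZm : μ (⋃ k ∈ Finset.range m, {x : Ω | p k (x k) = 0}) = 0 := by
        refine le_antisymm ((measure_biUnion_finset_le _ _).trans ?_) (zero_le)
        rw [Finset.sum_congr rfl (fun k _ => hZnull k)]
        simp
      calc μ ({ω : Ω | μ {ω} ≠ 0}ᶜ)
          ≤ μ ((⋃ k ∈ Finset.range m, {x : Ω | p k (x k) = 0}) ∪ (T m)ᶜ) :=
            measure_mono (hAc_sub m)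
      _ ≤ μ (⋃ k ∈ Finset.range m, {x : Ω | p k (x k) = 0}) + μ ((T m)ᶜ) := measure_union_le _ _
      _ = μ ((T m)ᶜ) := by rw [hZm, zero_add]
      _ = 1 - μ (T m) := by
          rw [measure_compl (hTmeas m) (measure_ne_top μ _), measure_univ]
      _ ≤ 1 - ENNReal.ofReal (c' / Q m) := tsub_le_tsub_left (hTlb m) 1
    have hc'pos : 0 < c' := lt_of_lt_of_le hc hc'
    have h1 : Tendsto (fun m => c' / Q m) atTop (𝓝 1) := by
      have := Tendsto.div (tendsto_const_nhds (x := c')) hQtend (ne_of_gt hc'pos)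
      rwa [div_self (ne_of_gt hc'pos)] at this
    have h2 : Tendsto (fun m => ENNReal.ofReal (c' / Q m)) atTop (𝓝 1) := by
      have := (ENNReal.continuous_ofReal.tendsto 1).comp h1
      simpa [Function.comp_def] using this
    have h3 : Tendsto (fun m => (1 : ENNReal) - ENNReal.ofReal (c' / Q m)) atTop (𝓝 0) := by
      have := ((ENNReal.continuous_sub_left (a := 1) (by norm_num)).tendsto 1).comp h2
      simpa [Function.comp_def] using this
    exact le_antisymm (ge_of_tendsto' h3 hub) (zero_le)
  refine ⟨hA_count, ?_⟩
  have hAmeas : MeasurableSet {ω : Ω | μ {ω} ≠ 0} := by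
    have h1 : {ω : Ω | μ {ω} ≠ 0} = ⋃ ω ∈ {ω : Ω | μ {ω} ≠ 0}, ({ω} : Set Ω) :=
      (Set.biUnion_of_singleton _).symm
    rw [h1]
    exact MeasurableSet.biUnion hA_count fun ω _ => hsingmeas ω
  have h5 := measure_add_measure_compl hAmeas (μ := μ)
  rw [hAcnull, add_zero, measure_univ] at h5
  exact h5
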